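/- If in addition K₁ is positive semidefinite and η₂ > 0 (so that M is positive semidefinite and all λᵢ ≥ 0), then ‖K₁ − H₁Λ₁H₁ᵀ‖²_F ≤ Σ_{i=s₁+1}^{N} λᵢ² − (1/η₂ − 2·s₁·Σ_{i=1}^{s₁} λᵢ)·(s₂/η₂). -/

import Mathlib

open Matrix Finset

/-- Frobenius norm of a real matrix: `‖A‖_F = sqrt(trace(AᵀA))`. -/
noncomputable def frobNorm {m n : ℕ} (A : Matrix (Fin m) (Fin n) ℝ) : ℝ :=
  Real.sqrt ((Aᵀ * A).trace)

lemma psd_diag_nonneg' {n : Type*} [Fintype n] [DecidableEq n]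
    {A : Matrix n n ℝ} (hA : A.PosSemidef) (i : n) : 0 ≤ A i i := by
  exact hA.diag_nonneg

lemma filter_sum_eq' (N s₁ : ℕ) (hs₁N : s₁ ≤ N) (g : Fin N → ℝ) :
    ∑ i ∈ Finset.univ.filter (fun i : Fin N => (i : ℕ) < s₁), g i
      = ∑ i : Fin s₁, g (Fin.castLE hs₁N i) := by
  rw [show Finset.univ.filter (fun i : Fin N => (i : ℕ) < s₁)
      = Finset.univ.map (Fin.castLEEmb hs₁N) from ?_, Finset.sum_map]
  · rfl
  · ext i
    simp only [Finset.mem_filter, Finset.mem_univ, true_and, Finset.mem_map,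
      Fin.castLEEmb_apply]
    constructor
    · intro h; exact ⟨⟨i, h⟩, rfl⟩
    · rintro ⟨j, rfl⟩; simp [j.2]

set_option maxHeartbeats 1600000 in
/-- Upper bound for the deep approximation error of `K₁` when `η₂ > 0`:
`‖K₁ − H₁Λ₁H₁ᵀ‖²_F ≤ Σ_{i=s₁+1}^{N} λᵢ² − (1/η₂ − 2·s₁·Σ_{i=1}^{s₁} λᵢ)·(s₂/η₂)`. -/
theorem dkpca_approximation_upper_bound_pos
    (N s₁ s₂ : ℕ) (hNpos : 0 < N) (hs₁pos : 0 < s₁) (hs₂pos : 0 < s₂) (hs₁N : s₁ ≤ N)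
    (η₂ : ℝ) (hη₂ : 0 < η₂)
    (K₁ : Matrix (Fin N) (Fin N) ℝ) (hK₁ : K₁.IsSymm) (hK₁psd : K₁.PosSemidef)
    (H₂ : Matrix (Fin N) (Fin s₂) ℝ) (hH₂ : H₂ᵀ * H₂ = 1)
    (M : Matrix (Fin N) (Fin N) ℝ) (hM : M = K₁ + (1 / η₂) • (H₂ * H₂ᵀ))
    -- (so that M is positive semidefinite and all λᵢ ≥ 0)
    (hMpsd : M.PosSemidef)
    -- λ₁ ≥ … ≥ λ_N : the eigenvalues of M in decreasing order with multiplicity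
    (lam : Fin N → ℝ) (hlam : Antitone lam) (hlamnonneg : ∀ i, 0 ≤ lam i)
    (U : Matrix (Fin N) (Fin N) ℝ) (hU : Uᵀ * U = 1)
    (hMU : M = U * Matrix.diagonal lam * Uᵀ)
    -- Λ₁ = diag(λ₁,…,λ_{s₁}), H₁ with orthonormal columns, M H₁ = H₁ Λ₁
    (Λ₁ : Matrix (Fin s₁) (Fin s₁) ℝ)
    (hΛ₁ : Λ₁ = Matrix.diagonal fun i : Fin s₁ => lam (Fin.castLE hs₁N i))
    (H₁ : Matrix (Fin N) (Fin s₁) ℝ) (hH₁ : H₁ᵀ * H₁ = 1)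
    (hMH₁ : M * H₁ = H₁ * Λ₁) :
    (frobNorm (K₁ - H₁ * Λ₁ * H₁ᵀ)) ^ 2
      ≤ (∑ i ∈ Finset.univ.filter (fun i : Fin N => s₁ ≤ (i : ℕ)), (lam i) ^ 2)
        - (1 / η₂
            - 2 * (s₁ : ℝ) * ∑ i ∈ Finset.univ.filter (fun i : Fin N => (i : ℕ) < s₁), lam i)
          * ((s₂ : ℝ) / η₂) := by
  set c : ℝ := 1 / η₂ with hc
  have hcpos : 0 < c := by rw [hc]; positivity
  set Q : Matrix (Fin N) (Fin N) ℝ := H₂ * H₂ᵀ with hQ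
  set P : Matrix (Fin N) (Fin N) ℝ := H₁ * Λ₁ * H₁ᵀ with hP
  -- basic symmetry facts
  have hΛsymm : Λ₁ᵀ = Λ₁ := by rw [hΛ₁, Matrix.diagonal_transpose]
  have hPsymm : Pᵀ = P := by
    rw [hP]; simp [Matrix.transpose_mul, hΛsymm, Matrix.mul_assoc]
  have hQsymm : Qᵀ = Q := by rw [hQ]; simp [Matrix.transpose_mul]
  have hAsymm : (K₁ - P)ᵀ = K₁ - P := by
    rw [Matrix.transpose_sub, hPsymm, hK₁.eq]
  -- Q is idempotent
  have hQidem : Q * Q = Q := by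
    rw [hQ, Matrix.mul_assoc, ← Matrix.mul_assoc H₂ᵀ, hH₂, Matrix.one_mul]
  -- trace Q
  have htrQ : Q.trace = (s₂ : ℝ) := by
    rw [hQ, Matrix.trace_mul_comm, hH₂, Matrix.trace_one]; simp
  -- trace (M*M)
  have hUU' : U * Uᵀ = 1 := mul_eq_one_comm.mp hU
  have hUc : ∀ {k : ℕ} (X : Matrix (Fin N) (Fin k) ℝ), Uᵀ * (U * X) = X := fun X => by
    rw [← Matrix.mul_assoc, hU, Matrix.one_mul]
  have hH₁c : ∀ {k : ℕ} (X : Matrix (Fin s₁) (Fin k) ℝ), H₁ᵀ * (H₁ * X) = X :=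
    fun X => by rw [← Matrix.mul_assoc, hH₁, Matrix.one_mul]
  have htrMM : (M * M).trace = ∑ i, lam i ^ 2 := by
    rw [hMU]
    have h1 : U * Matrix.diagonal lam * Uᵀ * (U * Matrix.diagonal lam * Uᵀ)
        = U * (Matrix.diagonal lam * (Matrix.diagonal lam * Uᵀ)) := by
      simp only [Matrix.mul_assoc, hUc]
    rw [h1, Matrix.trace_mul_comm]
    simp only [Matrix.mul_assoc]
    rw [hU, Matrix.mul_one, Matrix.diagonal_mul_diagonal, Matrix.trace_diagonal]
    simp [sq]
  -- trace (M*P) and trace (P*P)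
  have hΛΛ : (Λ₁ * Λ₁).trace = ∑ i : Fin s₁, lam (Fin.castLE hs₁N i) ^ 2 := by
    rw [hΛ₁, Matrix.diagonal_mul_diagonal, Matrix.trace_diagonal]; simp [sq]
  have htrMP : (M * P).trace = ∑ i : Fin s₁, lam (Fin.castLE hs₁N i) ^ 2 := by
    have h1 : M * P = H₁ * (Λ₁ * (Λ₁ * H₁ᵀ)) := by
      rw [hP]
      simp only [← Matrix.mul_assoc]
      rw [hMH₁]
    rw [h1, Matrix.trace_mul_comm]
    simp only [Matrix.mul_assoc]
    rw [hH₁, Matrix.mul_one, hΛΛ]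
  have htrPP : (P * P).trace = ∑ i : Fin s₁, lam (Fin.castLE hs₁N i) ^ 2 := by
    have h1 : P * P = H₁ * (Λ₁ * (Λ₁ * H₁ᵀ)) := by
      rw [hP]
      simp only [Matrix.mul_assoc, hH₁c]
    rw [h1, Matrix.trace_mul_comm]
    simp only [Matrix.mul_assoc]
    rw [hH₁, Matrix.mul_one, hΛΛ]
  -- trace (K₁ * Q) ≥ 0
  have htrK₁Q : 0 ≤ (K₁ * Q).trace := by
    have hpsd : (H₂ᵀ * K₁ * H₂).PosSemidef := by
      have := hK₁psd.conjTranspose_mul_mul_same H₂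
      simpa [Matrix.conjTranspose_eq_transpose_of_trivial] using this
    have : (K₁ * Q).trace = (H₂ᵀ * K₁ * H₂).trace := by
      rw [hQ, ← Matrix.mul_assoc, Matrix.trace_mul_comm]
      rw [Matrix.mul_assoc]
    rw [this, Matrix.trace]
    exact Finset.sum_nonneg fun i _ => psd_diag_nonneg' hpsd i
  -- the matrix C = H₁ᵀ Q H₁ : psd with diagonal entries ≤ 1
  set C : Matrix (Fin s₁) (Fin s₁) ℝ := H₁ᵀ * Q * H₁ with hCdef
  have hCpsd : C.PosSemidef := by
    have h1 : C = (H₂ᵀ * H₁)ᵀ * (H₂ᵀ * H₁) := by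
      rw [hCdef, hQ]; simp [Matrix.transpose_mul, Matrix.mul_assoc]
    rw [h1]
    have := Matrix.posSemidef_conjTranspose_mul_self (H₂ᵀ * H₁)
    simpa [Matrix.conjTranspose_eq_transpose_of_trivial] using this
  have hCdiag_le : ∀ i, C i i ≤ 1 := by
    intro i
    have h1Q : (1 - Q).PosSemidef := by
      have h2 : (1 - Q)ᵀ * (1 - Q) = 1 - Q := by
        rw [Matrix.transpose_sub, hQsymm, Matrix.transpose_one]
        rw [Matrix.sub_mul, Matrix.mul_sub, Matrix.mul_sub, hQidem]
        simp
      have := Matrix.posSemidef_conjTranspose_mul_self (1 - Q)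
      rw [Matrix.conjTranspose_eq_transpose_of_trivial, h2] at this
      exact this
    have hpsd : (H₁ᵀ * (1 - Q) * H₁).PosSemidef := by
      have := h1Q.conjTranspose_mul_mul_same H₁
      simpa [Matrix.conjTranspose_eq_transpose_of_trivial] using this
    have h3 := psd_diag_nonneg' hpsd i
    have h4 : H₁ᵀ * (1 - Q) * H₁ = 1 - C := by
      rw [Matrix.mul_sub, Matrix.mul_one, Matrix.sub_mul, hH₁, hCdef]
    rw [h4] at h3
    have h5 : (1 : Matrix (Fin s₁) (Fin s₁) ℝ) i i = 1 := Matrix.one_apply_eq i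
    simp only [Matrix.sub_apply, h5] at h3
    linarith
  -- trace (P * Q) bounds
  have htrPQ_eq : (P * Q).trace = ∑ i : Fin s₁, lam (Fin.castLE hs₁N i) * C i i := by
    have h1 : (P * Q).trace = (Λ₁ * C).trace := by
      rw [hP, hCdef]
      simp only [Matrix.mul_assoc]
      rw [Matrix.trace_mul_comm]
      simp only [Matrix.mul_assoc]
    rw [h1, hΛ₁, Matrix.trace]
    congr 1; ext i
    rw [Matrix.diag_apply, Matrix.diagonal_mul]
  have htrPQ_nonneg : 0 ≤ (P * Q).trace := by
    rw [htrPQ_eq]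
    exact Finset.sum_nonneg fun i _ =>
      mul_nonneg (hlamnonneg _) (psd_diag_nonneg' hCpsd i)
  have htrPQ_le : (P * Q).trace ≤ ∑ i : Fin s₁, lam (Fin.castLE hs₁N i) := by
    rw [htrPQ_eq]
    exact Finset.sum_le_sum fun i _ =>
      mul_le_of_le_one_right (hlamnonneg _) (hCdiag_le i)
  -- trace (M * Q)
  have htrMQ : (M * Q).trace = (K₁ * Q).trace + c * s₂ := by
    rw [hM, Matrix.add_mul, Matrix.smul_mul, hQidem, Matrix.trace_add, Matrix.trace_smul,
      htrQ, smul_eq_mul]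
  -- main trace expansion
  set t : ℝ := ((K₁ - P)ᵀ * (K₁ - P)).trace with ht
  have htnonneg : 0 ≤ t := by
    rw [ht, Matrix.trace]
    refine Finset.sum_nonneg fun j _ => ?_
    rw [Matrix.diag_apply, Matrix.mul_apply]
    exact Finset.sum_nonneg fun k _ => by
      rw [Matrix.transpose_apply]; exact mul_self_nonneg _
  have hKP : K₁ - P = M - c • Q - P := by rw [hM]; abel
  have hexp : t = (M * M).trace - 2 * c * (M * Q).trace - 2 * (M * P).trace
      + c ^ 2 * (Q * Q).trace + 2 * c * (P * Q).trace + (P * P).trace := by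
    rw [ht, hAsymm, hKP]
    simp only [Matrix.sub_mul, Matrix.mul_sub, Matrix.smul_mul, Matrix.mul_smul,
      Matrix.trace_sub, Matrix.trace_smul, smul_smul, smul_eq_mul]
    have e1 : (Q * M).trace = (M * Q).trace := Matrix.trace_mul_comm Q M
    have e2 : (P * M).trace = (M * P).trace := Matrix.trace_mul_comm P M
    have e3 : (Q * P).trace = (P * Q).trace := Matrix.trace_mul_comm Q P
    rw [e1, e2, e3]; ring
  -- frobNorm squared equals t
  have hfrob : (frobNorm (K₁ - H₁ * Λ₁ * H₁ᵀ)) ^ 2 = t := by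
    unfold frobNorm
    rw [← ht, Real.sq_sqrt htnonneg]
  rw [hfrob]
  -- sums
  set S : ℝ := ∑ i : Fin s₁, lam (Fin.castLE hs₁N i) with hS
  have hSnonneg : 0 ≤ S := Finset.sum_nonneg fun i _ => hlamnonneg _
  have hsum1 : ∑ i ∈ Finset.univ.filter (fun i : Fin N => (i : ℕ) < s₁), lam i = S :=
    filter_sum_eq' N s₁ hs₁N lam
  have hsum2 : ∑ i ∈ Finset.univ.filter (fun i : Fin N => s₁ ≤ (i : ℕ)), lam i ^ 2
      = (∑ i, lam i ^ 2) - ∑ i : Fin s₁, lam (Fin.castLE hs₁N i) ^ 2 := by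
    have := Finset.sum_filter_add_sum_filter_not Finset.univ
      (fun i : Fin N => (i : ℕ) < s₁) (fun i => lam i ^ 2)
    have hfe : Finset.univ.filter (fun i : Fin N => ¬ (i : ℕ) < s₁)
        = Finset.univ.filter (fun i : Fin N => s₁ ≤ (i : ℕ)) := by
      apply Finset.filter_congr; intro i _; simp [not_lt]
    rw [hfe] at this
    rw [filter_sum_eq' N s₁ hs₁N (fun i => lam i ^ 2)] at this
    linarith
  rw [hsum1, hsum2]
  -- final arithmetic
  have htrQQ : (Q * Q).trace = (s₂ : ℝ) := by rw [hQidem, htrQ]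
  have hs₁1 : (1:ℝ) ≤ (s₁:ℝ) := by exact_mod_cast hs₁pos
  have hs₂1 : (1:ℝ) ≤ (s₂:ℝ) := by exact_mod_cast hs₂pos
  have hdiv : (s₂:ℝ)/η₂ = (s₂:ℝ) * c := by rw [hc]; ring
  rw [hexp, htrMM, htrMP, htrPP, htrQQ, htrMQ, hdiv]
  nlinarith [mul_le_mul_of_nonneg_left htrPQ_le hcpos.le, mul_nonneg hcpos.le htrK₁Q,
    mul_nonneg (mul_nonneg hcpos.le hSnonneg)
      (by nlinarith : (0:ℝ) ≤ (s₁:ℝ)*(s₂:ℝ) - 1)]
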